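/- Let E be a nonzero finite-dimensional real inner product space and let k : E ∖ {0} → ℕ be a function taking only odd values, with the property that for every odd natural number n the set N(n) := {0} ∪ {u ∈ E ∖ {0} : k(u) ≥ n} is a linear subspace of E. Then there exist an integer p ≥ 1, odd natural numbers k_1 < k_2 < … < k_p, and nonzero pairwise orthogonal linear subspaces E_1, …, E_p of E such that E is the (internal, orthogonal) direct sum E = E_1 ⊕ … ⊕ E_p and k(u) = k_ℓ for every ℓ ∈ {1,…,p} and every u ∈ E_ℓ ∖ {0}. -/

import Mathlib

/-- Structural core of Proposition 5.1: if `k` assigns odd natural numbers to nonzero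
vectors of a nonzero finite-dimensional real inner product space `E`, and for every odd `n`
the set `{0} ∪ {u ≠ 0 : k(u) ≥ n}` is a linear subspace, then `E` decomposes as an
orthogonal direct sum `E = E₁ ⊕ ⋯ ⊕ E_p` of nonzero subspaces with `k ≡ k_ℓ` on
`E_ℓ ∖ {0}` for strictly increasing odd numbers `k₁ < ⋯ < k_p`. -/
theorem stmt2 {E : Type*} [NormedAddCommGroup E] [InnerProductSpace ℝ E]
    [FiniteDimensional ℝ E] [Nontrivial E]
    (k : E → ℕ) (hodd : ∀ u : E, u ≠ 0 → Odd (k u))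
    (hsub : ∀ n : ℕ, Odd n →
      ∃ S : Submodule ℝ E, (S : Set E) = {0} ∪ {u : E | u ≠ 0 ∧ n ≤ k u}) :
    ∃ (p : ℕ) (ks : Fin p → ℕ) (Es : Fin p → Submodule ℝ E),
      1 ≤ p ∧
      StrictMono ks ∧ (∀ ℓ : Fin p, Odd (ks ℓ)) ∧ (∀ ℓ : Fin p, Es ℓ ≠ ⊥) ∧
      (∀ i j : Fin p, i ≠ j → ∀ u ∈ Es i, ∀ v ∈ Es j, (inner ℝ u v : ℝ) = 0) ∧
      (⨆ ℓ : Fin p, Es ℓ) = ⊤ ∧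
      (∀ ℓ : Fin p, ∀ u ∈ Es ℓ, u ≠ 0 → k u = ks ℓ) := by
    classical
  choose! S hS using hsub
  have hmem : ∀ n : ℕ, Odd n → ∀ u : E, u ∈ S n ↔ u = 0 ∨ (u ≠ 0 ∧ n ≤ k u) := by
    intro n hn u
    rw [← SetLike.mem_coe, hS n hn]
    simp [Set.mem_union]
  have hmem' : ∀ n : ℕ, Odd n → ∀ u : E, u ≠ 0 → (u ∈ S n ↔ n ≤ k u) := by
    intro n hn u hu
    rw [hmem n hn u]
    tauto
  have hanti : ∀ m n : ℕ, Odd m → Odd n → m ≤ n → S n ≤ S m := by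
    intro m n hm hn hmn u hu
    rw [hmem n hn] at hu
    rw [hmem m hm]
    rcases hu with h | ⟨h1, h2⟩
    · exact Or.inl h
    · exact Or.inr ⟨h1, le_trans hmn h2⟩
  -- the value set
  set V : Set ℕ := k '' {u : E | u ≠ 0} with hV
  have hVodd : ∀ v ∈ V, Odd v := by
    rintro v ⟨u, hu, rfl⟩
    exact hodd u hu
  have hVwit : ∀ v ∈ V, ∃ u : E, u ≠ 0 ∧ k u = v := by
    rintro v ⟨u, hu, rfl⟩
    exact ⟨u, hu, rfl⟩
  have hVlt : ∀ v ∈ V, ∀ w ∈ V, v < w → S w < S v := by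
    intro v hv w hw hvw
    obtain ⟨u, hu, hku⟩ := hVwit v hv
    refine lt_of_le_of_ne (hanti v w (hVodd v hv) (hVodd w hw) hvw.le) ?_
    intro he
    have h1 : u ∈ S v := (hmem' v (hVodd v hv) u hu).2 (le_of_eq hku.symm)
    rw [← he] at h1
    have := (hmem' w (hVodd w hw) u hu).1 h1
    omega
  have hVfin : V.Finite := by
    have himg : ((fun v => Module.finrank ℝ (S v)) '' V).Finite :=
      (Set.finite_Iic (Module.finrank ℝ E)).subset (by
        rintro _ ⟨v, _, rfl⟩
        exact Submodule.finrank_le _)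
    refine Set.Finite.of_finite_image himg ?_
    intro v hv w hw he
    by_contra hne
    rcases lt_or_gt_of_ne hne with h | h
    · exact absurd he (Submodule.finrank_lt_finrank_of_lt (hVlt v hv w hw h)).ne'
    · exact absurd he (Submodule.finrank_lt_finrank_of_lt (hVlt w hw v hv h)).ne
  have hVne : V.Nonempty := by
    obtain ⟨u, hu⟩ := exists_ne (0 : E)
    exact ⟨k u, u, hu, rfl⟩
  set Vf : Finset ℕ := hVfin.toFinset with hVf
  have hVfmem : ∀ v, v ∈ Vf ↔ v ∈ V := by intro v; simp [hVf]
  set p : ℕ := Vf.card with hp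
  have hp1 : 1 ≤ p := Finset.card_pos.2 ⟨hVne.choose, (hVfmem _).2 hVne.choose_spec⟩
  set e : Fin p ≃o Vf := Vf.orderIsoOfFin rfl with he
  set ks : Fin p → ℕ := fun ℓ => (e ℓ : ℕ) with hks
  have hksmono : StrictMono ks := by
    intro i j hij
    exact_mod_cast (e.lt_iff_lt.2 hij)
  have hksV : ∀ ℓ, ks ℓ ∈ V := fun ℓ => (hVfmem _).1 (e ℓ).2
  have hksodd : ∀ ℓ, Odd (ks ℓ) := fun ℓ => hVodd _ (hksV ℓ)
  have hsurj : ∀ v ∈ V, ∃ ℓ, ks ℓ = v := by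
    intro v hv
    exact ⟨e.symm ⟨v, (hVfmem v).2 hv⟩, by simp [hks]⟩
  -- successor subspace
  set Succ : Fin p → Submodule ℝ E := fun ℓ =>
    if h : ℓ.val + 1 < p then S (ks ⟨ℓ.val + 1, h⟩) else ⊥ with hSucc
  set Es : Fin p → Submodule ℝ E := fun ℓ => (Succ ℓ)ᗮ ⊓ S (ks ℓ) with hEs
  have hSuccle : ∀ ℓ, Succ ℓ ≤ S (ks ℓ) := by
    intro ℓ
    rw [hSucc]
    dsimp only
    split
    · exact hanti _ _ (hksodd ℓ) (hksodd _) (hksmono (by simp [Fin.lt_def])).le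
    · exact bot_le
  have hsplit : ∀ ℓ, Succ ℓ ⊔ Es ℓ = S (ks ℓ) := fun ℓ =>
    Submodule.sup_orthogonal_inf_of_hasOrthogonalProjection (hSuccle ℓ)
  -- nonzero vectors in S (ks ℓ) have k ≥ ks ℓ; in Succ ℓ contradiction setup
  have hmemSucc : ∀ ℓ : Fin p, ∀ u : E, u ≠ 0 → u ∈ Succ ℓ → ks ℓ < k u := by
    intro ℓ u hu hmemu
    rw [hSucc] at hmemu
    dsimp only at hmemu
    split at hmemu
    · next h =>
      have := (hmem' _ (hksodd ⟨ℓ.val + 1, h⟩) u hu).1 hmemu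
      have h2 : ks ℓ < ks ⟨ℓ.val + 1, h⟩ := hksmono (by simp [Fin.lt_def])
      omega
    · exact absurd hmemu (by simp [hu])
  -- constancy of k on Es ℓ
  have hconst : ∀ ℓ : Fin p, ∀ u ∈ Es ℓ, u ≠ 0 → k u = ks ℓ := by
    intro ℓ u hmemu hu
    obtain ⟨huo, huS⟩ := hmemu
    have h1 : ks ℓ ≤ k u := (hmem' _ (hksodd ℓ) u hu).1 huS
    by_contra hne
    have hlt : ks ℓ < k u := lt_of_le_of_ne h1 (Ne.symm hne)
    obtain ⟨m, hm⟩ := hsurj (k u) ⟨u, hu, rfl⟩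
    have hlm : ℓ < m := hksmono.lt_iff_lt.1 (by omega)
    have hmp : ℓ.val + 1 < p := by
      have := m.isLt
      have := hlm
      rw [Fin.lt_def] at this
      omega
    have huSucc : u ∈ Succ ℓ := by
      rw [hSucc]
      dsimp only
      rw [dif_pos hmp]
      refine hanti _ _ (hksodd ⟨ℓ.val + 1, hmp⟩) (hksodd m) ?_ ?_
      · exact hksmono.monotone (by rw [Fin.le_def]; dsimp; rw [Fin.lt_def] at hlm; omega)
      · exact (hmem' _ (hksodd m) u hu).2 (le_of_eq hm)
    have : (inner ℝ u u : ℝ) = 0 := (Submodule.mem_orthogonal _ u).1 huo u huSucc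
    exact hu (inner_self_eq_zero.1 this)
  refine ⟨p, ks, Es, hp1, hksmono, hksodd, ?_, ?_, ?_, hconst⟩
  · -- nonzero
    intro ℓ hbot
    obtain ⟨u, hu, hku⟩ := hVwit (ks ℓ) (hksV ℓ)
    have huS : u ∈ S (ks ℓ) := (hmem' _ (hksodd ℓ) u hu).2 (le_of_eq hku.symm)
    rw [← hsplit ℓ, hbot, sup_bot_eq] at huS
    have := hmemSucc ℓ u hu huS
    omega
  · -- orthogonality
    have key : ∀ i j : Fin p, i < j → ∀ u ∈ Es i, ∀ v ∈ Es j, (inner ℝ u v : ℝ) = 0 := by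
      intro i j hij u hu v hv
      obtain ⟨huo, _⟩ := hu
      obtain ⟨_, hvS⟩ := hv
      have hip : i.val + 1 < p := by
        have := j.isLt
        rw [Fin.lt_def] at hij
        omega
      have hvSucc : v ∈ Succ i := by
        rw [hSucc]
        dsimp only
        rw [dif_pos hip]
        refine hanti _ _ (hksodd ⟨i.val + 1, hip⟩) (hksodd j)
          (hksmono.monotone (by rw [Fin.le_def]; dsimp; rw [Fin.lt_def] at hij; omega)) hvS
      have := (Submodule.mem_orthogonal _ u).1 huo v hvSucc
      rw [real_inner_comm] at this
      exact this
    intro i j hij u hu v hv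
    rcases lt_or_gt_of_ne hij with h | h
    · exact key i j h u hu v hv
    · rw [real_inner_comm]; exact key j i h v hv u hu
  · -- supremum is top
    have htop : S (ks ⟨0, hp1⟩) = ⊤ := by
      rw [eq_top_iff]
      intro u _
      by_cases hu : u = 0
      · rw [hmem _ (hksodd _)]; exact Or.inl hu
      · obtain ⟨m, hm⟩ := hsurj (k u) ⟨u, hu, rfl⟩
        refine (hmem' _ (hksodd _) u hu).2 ?_
        rw [← hm]
        exact hksmono.monotone (by simp [Fin.le_def])
    have hstep : ∀ m : ℕ, ∀ ℓ : Fin p, p - ℓ.val ≤ m → S (ks ℓ) ≤ ⨆ j, Es j := by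
      intro m
      induction m with
      | zero => intro ℓ hl; have := ℓ.isLt; omega
      | succ m ih =>
        intro ℓ hl
        rw [← hsplit ℓ]
        refine sup_le ?_ (le_iSup Es ℓ)
        rw [hSucc]
        dsimp only
        split
        · next h => exact ih ⟨ℓ.val + 1, h⟩ (by dsimp; omega)
        · exact bot_le
    rw [eq_top_iff, ← htop]
    exact hstep p ⟨0, hp1⟩ (by simp)
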